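/- arXiv:2512.22721 — 3 statements merged into one kernel-verified Lean document; each statement's English description precedes it below -/
import Mathlib

section
/- Let Q and A be n×n real matrices, B an n×m real matrix, R an m×m real symmetric positive definite matrix, and P an n×n real symmetric positive semidefinite matrix, with Q symmetric positive semidefinite. Then the matrix Π := Q + AᵀPA − AᵀPB(R + BᵀPB)⁻¹BᵀPA is symmetric and positive semidefinite. -/
open Matrix

private lemma myconj {α β : Type*} (M : Matrix α β ℝ) : Mᴴ = Mᵀ :=
  conjTranspose_eq_transpose_of_trivial M

/-- The one-step minimized quadratic coefficient
`Π = Q + AᵀPA − AᵀPB(R + BᵀPB)⁻¹BᵀPA`. -/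
noncomputable def piStep {n m : ℕ} (Q A P : Matrix (Fin n) (Fin n) ℝ)
    (B : Matrix (Fin n) (Fin m) ℝ) (R : Matrix (Fin m) (Fin m) ℝ) :
    Matrix (Fin n) (Fin n) ℝ :=
  Q + Aᵀ * P * A - Aᵀ * P * B * (R + Bᵀ * P * B)⁻¹ * (Bᵀ * P * A)

theorem piStep_isSymm_posSemidef {n m : ℕ}
    (Q A P : Matrix (Fin n) (Fin n) ℝ)
    (B : Matrix (Fin n) (Fin m) ℝ) (R : Matrix (Fin m) (Fin m) ℝ)
    (hR : R.PosDef) (hP : P.PosSemidef) (hQ : Q.PosSemidef) :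
    (piStep Q A P B R).IsHermitian ∧ (piStep Q A P B R).PosSemidef := by
  have hPt : Pᵀ = P := by rw [← myconj]; exact hP.isHermitian.eq
  have hBPB : (Bᵀ * P * B).PosSemidef := by
    have := hP.conjTranspose_mul_mul_same B
    rwa [myconj] at this
  set S := R + Bᵀ * P * B with hSdef
  have hS : S.PosDef := hR.add_posSemidef hBPB
  haveI : Invertible S := hS.isUnit.invertible
  have hCT : (Aᵀ * P * B)ᴴ = Bᵀ * P * A := by
    rw [myconj, transpose_mul, transpose_mul, transpose_transpose, hPt, Matrix.mul_assoc]
  have hblockdiag : (fromBlocks Q (0 : Matrix (Fin n) (Fin m) ℝ)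
      (0 : Matrix (Fin m) (Fin n) ℝ) R).PosSemidef := by
    haveI : Invertible R := hR.isUnit.invertible
    have := (PosDef.fromBlocks₂₂ Q (0 : Matrix (Fin n) (Fin m) ℝ) hR).2
    simp only [conjTranspose_zero, Matrix.zero_mul, Matrix.mul_zero, sub_zero] at this
    exact this hQ
  have hMid : (fromCols A B)ᴴ * P * fromCols A B =
      fromBlocks (Aᵀ * P * A) (Aᵀ * P * B) (Bᵀ * P * A) (Bᵀ * P * B) := by
    rw [myconj, transpose_fromCols, fromRows_mul, fromRows_mul, mul_fromCols,
      mul_fromCols, fromRows_fromCols_eq_fromBlocks]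
  have hblock : (fromBlocks (Q + Aᵀ * P * A) (Aᵀ * P * B) (Aᵀ * P * B)ᴴ S).PosSemidef := by
    have h1 := hP.conjTranspose_mul_mul_same (fromCols A B)
    rw [hMid] at h1
    have h2 := hblockdiag.add h1
    rw [fromBlocks_add, zero_add, zero_add] at h2
    rwa [hCT]
  have hfinal : (Q + Aᵀ * P * A - Aᵀ * P * B * S⁻¹ * (Bᵀ * P * A)).PosSemidef := by
    have := (PosDef.fromBlocks₂₂ _ _ hS).1 hblock
    rwa [hCT] at this
  have heq : piStep Q A P B R = Q + Aᵀ * P * A - Aᵀ * P * B * S⁻¹ * (Bᵀ * P * A) := rfl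
  rw [heq]
  exact ⟨hfinal.isHermitian, hfinal⟩
end

section
/- Let N be a nonempty finite index set, α̃ : N → ℝ, and b > 0 a budget, and assume Σ_{n∈N} max(α̃(n), 0) ≥ b. Then there exists a unique θ ∈ ℝ with θ ≥ 0 such that Σ_{n∈N} max(α̃(n) − θ, 0) = b. -/
theorem waterfilling_threshold_exists_unique {N : Type*} [Fintype N] [Nonempty N]
    (α : N → ℝ) (b : ℝ) (hb : 0 < b)
    (hsum : b ≤ ∑ n, max (α n) 0) :
    ∃! θ : ℝ, 0 ≤ θ ∧ ∑ n, max (α n - θ) 0 = b := by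
  set φ : ℝ → ℝ := fun θ => ∑ n, max (α n - θ) 0 with hφ
  have hcont : Continuous φ := by
    apply continuous_finset_sum
    intro n _
    exact (continuous_const.sub continuous_id).max continuous_const
  -- antitone
  have hmono : ∀ θ₁ θ₂ : ℝ, θ₁ ≤ θ₂ → φ θ₂ ≤ φ θ₁ := by
    intro θ₁ θ₂ h
    apply Finset.sum_le_sum
    intro n _
    exact max_le_max (by linarith) le_rfl
  set M : ℝ := (Finset.univ.sup' Finset.univ_nonempty α) ⊔ 0 with hM
  have hM0 : 0 ≤ M := le_max_right _ _
  have hφM : φ M = 0 := by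
    apply Finset.sum_eq_zero
    intro n _
    have : α n ≤ M := le_trans (Finset.le_sup' α (Finset.mem_univ n)) (le_max_left _ _)
    simp [max_eq_right, sub_nonpos.mpr this]
  have hφ0 : b ≤ φ 0 := by
    simp only [hφ, sub_zero]; exact hsum
  -- strict decrease where positive
  have hstrict : ∀ θ₁ θ₂ : ℝ, θ₁ < θ₂ → 0 < φ θ₁ → φ θ₂ < φ θ₁ := by
    intro θ₁ θ₂ h hpos
    obtain ⟨n0, -, hn0⟩ : ∃ n ∈ Finset.univ, 0 < max (α n - θ₁) 0 := by
      by_contra hc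
      push_neg at hc
      have : φ θ₁ ≤ 0 := Finset.sum_nonpos fun n hn => hc n hn
      linarith
    have hα : θ₁ < α n0 := by
      rcases lt_max_iff.mp hn0 with h' | h'
      · linarith
      · exact absurd h' (lt_irrefl 0)
    apply Finset.sum_lt_sum
    · intro n _
      exact max_le_max (by linarith) le_rfl
    · refine ⟨n0, Finset.mem_univ n0, ?_⟩
      have h1 : max (α n0 - θ₁) 0 = α n0 - θ₁ := max_eq_left (by linarith)
      rw [h1]
      apply max_lt (by linarith) (by linarith)
  -- existence via IVT
  have hb_mem : b ∈ Set.Icc (φ M) (φ 0) := ⟨by rw [hφM]; linarith, hφ0⟩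
  have := intermediate_value_Icc' hM0 (hcont.continuousOn (s := Set.Icc 0 M)) hb_mem
  obtain ⟨θ, hθmem, hθ⟩ := this
  refine ⟨θ, ⟨hθmem.1, hθ⟩, ?_⟩
  rintro θ' ⟨hθ'0, hθ'⟩
  have hθ'2 : φ θ' = b := hθ'
  by_contra hne
  rcases lt_or_gt_of_ne hne with h | h
  · have := hstrict θ' θ h (by rw [hθ'2]; exact hb)
    rw [hθ'2, hθ] at this; linarith
  · have := hstrict θ θ' h (by rw [hθ]; exact hb)
    rw [hθ'2, hθ] at this; linarith
end

section
/- Let N be a nonempty finite index set, α̃ : N → ℝ, and b > 0 with Σ_{n∈N} max(α̃(n), 0) ≥ b, and let θ ≥ 0 be the unique real number with Σ_{n∈N} max(α̃(n) − θ, 0) = b. Define a⋆(n) := max(α̃(n) − θ, 0). Then a⋆ ∈ Δ_b, and a⋆ is the Euclidean projection of α̃ onto Δ_b: for every a ∈ Δ_b, Σ_{n∈N} (a(n) − α̃(n))² ≥ Σ_{n∈N} (a⋆(n) − α̃(n))², with equality if and only if a = a⋆. -/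
/-- The scaled simplex `Δ_b = { a | a(n) ≥ 0 for all n and Σ_n a(n) = b }`. -/
def scaledSimplex {N : Type*} [Fintype N] (b : ℝ) : Set (N → ℝ) :=
  {a | (∀ n, 0 ≤ a n) ∧ ∑ n, a n = b}

theorem waterfilling_is_euclidean_projection {N : Type*} [Fintype N] [Nonempty N]
    (α : N → ℝ) (b : ℝ) (hb : 0 < b)
    (hsum : b ≤ ∑ n, max (α n) 0)
    (θ : ℝ) (hθ : 0 ≤ θ) (hθeq : ∑ n, max (α n - θ) 0 = b) :
    (fun n => max (α n - θ) 0) ∈ scaledSimplex (N := N) b ∧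
    ∀ a : N → ℝ, a ∈ scaledSimplex (N := N) b →
      (∑ n, (max (α n - θ) 0 - α n) ^ 2 ≤ ∑ n, (a n - α n) ^ 2 ∧
        ((∑ n, (a n - α n) ^ 2 = ∑ n, (max (α n - θ) 0 - α n) ^ 2) ↔
          a = fun n => max (α n - θ) 0)) := by
  classical
  set f : N → ℝ := fun n => max (α n - θ) 0 with hf
  have hmem : f ∈ scaledSimplex (N := N) b := ⟨fun n => le_max_right _ _, hθeq⟩
  refine ⟨hmem, fun a ha => ?_⟩
  obtain ⟨hpos, hsuma⟩ := ha
  have key : ∀ n, (a n - α n) ^ 2 =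
      (a n - f n) ^ 2 + 2 * ((a n - f n) * (f n - α n)) + (f n - α n) ^ 2 := by
    intro n; ring
  have hq : ∑ n, (a n - α n) ^ 2 =
      ∑ n, (a n - f n) ^ 2 + 2 * ∑ n, (a n - f n) * (f n - α n)
        + ∑ n, (f n - α n) ^ 2 := by
    rw [Finset.mul_sum, ← Finset.sum_add_distrib, ← Finset.sum_add_distrib]
    exact Finset.sum_congr rfl fun n _ => key n
  have hS : 0 ≤ ∑ n, (a n - f n) * (f n - α n) := by
    have hpt : ∀ n, (a n - f n) * (-θ) ≤ (a n - f n) * (f n - α n) := by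
      intro n
      rcases le_or_gt θ (α n) with h | h
      · have hfn : f n = α n - θ := max_eq_left (by linarith)
        rw [hfn]; exact le_of_eq (by ring)
      · have hf0 : f n = 0 := max_eq_right (by linarith)
        have := hpos n
        rw [hf0]; nlinarith
    calc (0 : ℝ) = (∑ n, (a n - f n)) * (-θ) := by
          rw [Finset.sum_sub_distrib, hsuma, hθeq]; ring
      _ = ∑ n, (a n - f n) * (-θ) := by rw [Finset.sum_mul]
      _ ≤ _ := Finset.sum_le_sum fun n _ => hpt n
  have hsq : 0 ≤ ∑ n, (a n - f n) ^ 2 :=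
    Finset.sum_nonneg fun n _ => sq_nonneg _
  constructor
  · linarith
  constructor
  · intro heq
    have h0 : ∑ n, (a n - f n) ^ 2 = 0 := by linarith
    have := (Finset.sum_eq_zero_iff_of_nonneg
      (fun n _ => sq_nonneg (a n - f n))).mp h0
    funext n
    have := this n (Finset.mem_univ n)
    have : a n - f n = 0 := by nlinarith [sq_nonneg (a n - f n)]
    simpa [hf] using by linarith
  · intro heq
    subst heq
    rfl
end
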